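/- If $a_1,\ldots,a_n\in\{-1,1\}$ and $c_k=\sum_{j=1}^{n-k}a_ja_{j+k}$, then $c_k+c_{n-k}\equiv n \pmod 4$ for $k=1,\ldots,n-1$. -/

import Mathlib

open Finset

private lemma aux_pm (b : ℕ → ℤ) (s : Finset ℕ) (hb : ∀ j ∈ s, b j = 1 ∨ b j = -1) :
    ((∏ j ∈ s, b j) = 1 ∨ (∏ j ∈ s, b j) = -1) ∧
      (4 : ℤ) ∣ (∑ j ∈ s, b j) + (∏ j ∈ s, b j) - s.card - 1 := by
  classical
  induction s using Finset.induction_on with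
  | empty => simp
  | @insert x t hx ih =>
    have hbx : b x = 1 ∨ b x = -1 := hb x (mem_insert_self _ _)
    have hbt : ∀ j ∈ t, b j = 1 ∨ b j = -1 := fun j hj => hb j (mem_insert_of_mem hj)
    obtain ⟨hP, hD⟩ := ih hbt
    rw [Finset.prod_insert hx, Finset.sum_insert hx, Finset.card_insert_of_notMem hx]
    constructor
    · rcases hbx with h | h <;> rcases hP with h2 | h2 <;> simp [h, h2]
    · obtain ⟨m, hm⟩ := hD
      rcases hbx with h | h
      · rw [h]; exact ⟨m, by push_cast; linarith⟩
      · rw [h]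
        rcases hP with h2 | h2
        · rw [h2] at hm ⊢; exact ⟨m - 1, by push_cast; push_cast at hm; linarith⟩
        · rw [h2] at hm ⊢; exact ⟨m, by push_cast; push_cast at hm; linarith⟩

theorem stmt3 (n : ℕ) (hn : 2 ≤ n) (a : ℕ → ℤ)
    (ha : ∀ j ∈ Icc 1 n, a j = 1 ∨ a j = -1)
    (c : ℕ → ℤ) (hc : ∀ k, c k = ∑ j ∈ Icc 1 (n - k), a j * a (j + k)) :
    ∀ k, 1 ≤ k → k ≤ n - 1 → (4 : ℤ) ∣ (c k + c (n - k) - (n : ℤ)) := by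
  intro k hk1 hk2
  have hkn : k ≤ n - 1 := hk2
  have hkn' : k < n := by omega
  set f : ℕ → ℕ := fun j => if j ≤ n - k then j + k else j + k - n with hf
  set g : ℕ → ℕ := fun j => if j ≤ k then j + n - k else j - k with hg
  have hfmem : ∀ j ∈ Icc 1 n, f j ∈ Icc 1 n := by
    intro j hj
    simp only [mem_Icc] at hj ⊢
    simp only [hf]
    split <;> omega
  have hgmem : ∀ j ∈ Icc 1 n, g j ∈ Icc 1 n := by
    intro j hj
    simp only [mem_Icc] at hj ⊢
    simp only [hg]
    split <;> omega
  have hgf : ∀ j ∈ Icc 1 n, g (f j) = j := by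
    intro j hj
    simp only [mem_Icc] at hj
    simp only [hf, hg]
    split
    · split <;> omega
    · split <;> omega
  have hfg : ∀ j ∈ Icc 1 n, f (g j) = j := by
    intro j hj
    simp only [mem_Icc] at hj
    simp only [hf, hg]
    split
    · split <;> omega
    · split <;> omega
  set b : ℕ → ℤ := fun j => a j * a (f j) with hb
  have hbpm : ∀ j ∈ Icc 1 n, b j = 1 ∨ b j = -1 := by
    intro j hj
    rcases ha j hj with h1 | h1 <;> rcases ha (f j) (hfmem j hj) with h2 | h2 <;>
      simp [hb, h1, h2]
  -- product of b equals (∏ a)^2 = 1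
  have hprodf : (∏ j ∈ Icc 1 n, a (f j)) = ∏ j ∈ Icc 1 n, a j :=
    Finset.prod_nbij' f g hfmem hgmem hgf hfg (fun j _ => rfl)
  have hprodb : (∏ j ∈ Icc 1 n, b j) = 1 := by
    have : (∏ j ∈ Icc 1 n, b j) = (∏ j ∈ Icc 1 n, a j) * (∏ j ∈ Icc 1 n, a (f j)) := by
      rw [← Finset.prod_mul_distrib]
    rw [this, hprodf]
    rcases (aux_pm a (Icc 1 n) ha).1 with h | h <;> rw [h] <;> ring
  -- sum of b equals c k + c (n-k)
  have hsumb : (∑ j ∈ Icc 1 n, b j) = c k + c (n - k) := by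
    rw [hc k, hc (n - k)]
    have e1 : Icc 1 n = Ioc 0 n := by rw [← Finset.Icc_add_one_left_eq_Ioc, zero_add]
    have e2 : Icc 1 (n - k) = Ioc 0 (n - k) := by rw [← Finset.Icc_add_one_left_eq_Ioc, zero_add]
    have e3 : n - (n - k) = k := by omega
    rw [e1, e2, e3, ← Finset.sum_Ioc_consecutive _ (Nat.zero_le (n - k)) (by omega : n - k ≤ n)]
    congr 1
    · apply Finset.sum_congr rfl
      intro j hj
      simp only [mem_Ioc] at hj
      simp only [hb, hf, if_pos hj.2]
    · -- ∑ j ∈ Ioc (n-k) n, a j * a (j + k - n) = ∑ j ∈ Icc 1 k, a j * a (j + (n - k))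
      rw [show Icc 1 k = Ioc 0 k from (Finset.Icc_add_one_left_eq_Ioc 0 k).symm]
      refine Finset.sum_nbij' (fun j => j - (n - k)) (fun i => i + (n - k)) ?_ ?_ ?_ ?_ ?_
      · intro j hj; simp only [mem_Ioc] at hj ⊢; omega
      · intro i hi; simp only [mem_Ioc] at hi ⊢; omega
      · intro j hj; simp only [mem_Ioc] at hj; omega
      · intro i hi; simp only [mem_Ioc] at hi; omega
      · intro j hj
        simp only [mem_Ioc] at hj
        simp only [hb, hf]
        rw [if_neg (by omega)]
        rw [show j + k - n = j - (n - k) by omega,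
            show j - (n - k) + (n - k) = j by omega]
        ring
  obtain ⟨m, hm⟩ := (aux_pm b (Icc 1 n) hbpm).2
  rw [hprodb, hsumb, Nat.card_Icc] at hm
  refine ⟨m, ?_⟩
  have : ((n + 1 - 1 : ℕ) : ℤ) = n := by push_cast [Nat.add_sub_cancel]; ring
  rw [this] at hm
  linarith
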